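/- Let w[i..j] and w[i'..j'] be fragments of a word w, both having abelian period P. If w[i..j] is properly contained in w[i'..j'], then w[i..j] is not an abelian run with period P. (Maximality of abelian runs with respect to containment among all fragments with the same period, not just those sharing an anchor.) -/

import Mathlib

open scoped BigOperators

variable {α : Type*} [DecidableEq α] [Fintype α]

/-- Parikh vector of a word: counts of each letter. -/
def parikh (w : List α) (a : α) : ℕ := w.count a

/-- Componentwise containment of Parikh vectors. -/
def PSub (P Q : α → ℕ) : Prop := ∀ a, P a ≤ Q a

/-- Strict containment of Parikh vectors. -/
def PSSub (P Q : α → ℕ) : Prop := PSub P Q ∧ P ≠ Q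

/-- Norm of a Parikh vector: sum of its components. -/
def pnorm (P : α → ℕ) : ℕ := ∑ a, P a

/-- Fragment w[i..j] (both endpoints included). -/
def frag (w : List α) (i j : ℕ) : List α := (w.drop i).take (j + 1 - i)

/-- `IsPF P w k u` : w = u 0 ++ u 1 ++ ⋯ ++ u k is a periodic factorization of w
with respect to P: the cores u 1, …, u (k-1) have Parikh vector P and the head u 0
and tail u k have Parikh vector strictly contained in P. -/
def IsPF (P : α → ℕ) (w : List α) (k : ℕ) (u : ℕ → List α) : Prop :=
  1 ≤ k ∧ w = ((List.range (k + 1)).map u).flatten ∧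
  (∀ i, 0 < i → i < k → parikh (u i) = P) ∧
  PSSub (parikh (u 0)) P ∧ PSSub (parikh (u k)) P

/-- Fragment w[i..j] has abelian period P. -/
def HasPeriod (P : α → ℕ) (w : List α) (i j : ℕ) : Prop :=
  ∃ m u, IsPF P (frag w i j) m u

/-- Fragment w[i..j] has abelian period P anchored at k : there is a periodic
factorization whose cores start (within w) at positions ≡ k (mod |P|). -/
def HasAnchPeriod (P : α → ℕ) (w : List α) (i j k : ℕ) : Prop :=
  ∃ m u, IsPF P (frag w i j) m u ∧ (i + (u 0).length) % pnorm P = k % pnorm P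

/-- Fragment w[i..j] is periodic with period P anchored at k
(factorization with at least two cores). -/
def PeriodicAnch (P : α → ℕ) (w : List α) (i j k : ℕ) : Prop :=
  ∃ m u, 3 ≤ m ∧ IsPF P (frag w i j) m u ∧
    (i + (u 0).length) % pnorm P = k % pnorm P

/-- Fragment w[i..j] is periodic with period P (at least two cores, any anchor). -/
def APeriodic (P : α → ℕ) (w : List α) (i j : ℕ) : Prop :=
  ∃ m u, 3 ≤ m ∧ IsPF P (frag w i j) m u

/-- k-anchored abelian run with period P. -/
def AnchoredRun (P : α → ℕ) (w : List α) (i j k : ℕ) : Prop :=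
  i ≤ j ∧ j < w.length ∧ PeriodicAnch P w i j k ∧
  (i = 0 ∨ ¬ PeriodicAnch P w (i - 1) j k) ∧
  (j + 1 = w.length ∨ ¬ PeriodicAnch P w i (j + 1) k)

/-- Abelian run with period P. -/
def AbelianRun (P : α → ℕ) (w : List α) (i j : ℕ) : Prop :=
  i ≤ j ∧ j < w.length ∧ APeriodic P w i j ∧
  (i = 0 ∨ ¬ APeriodic P w (i - 1) j) ∧
  (j + 1 = w.length ∨ ¬ APeriodic P w i (j + 1))

/-- B_i[k]: the starting position of the longest suffix of w[0..i] having abelian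
period P anchored at k (⊤ = ∞ if no such suffix exists). -/
noncomputable def Bfun (P : α → ℕ) (w : List α) (i k : ℕ) : ℕ∞ :=
  sInf {b : ℕ∞ | ∃ s : ℕ, b = (s : ℕ∞) ∧ s ≤ i + 1 ∧ HasAnchPeriod P w s i k}


-- Auxiliary development --

set_option linter.unusedSectionVars false




-- basics
lemma pnorm_parikh (s : List α) : pnorm (parikh s) = s.length := by
  induction s with
  | nil => simp [pnorm, parikh]
  | cons b t ih =>
    simp only [pnorm, parikh] at *
    have : ∀ a : α, (b :: t).count a = t.count a + if b = a then 1 else 0 := by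
      intro a; rw [List.count_cons]
      congr 1
      by_cases h : a = b
      · subst h; rw [if_pos (beq_self_eq_true a), if_pos rfl]
      · rw [if_neg (fun h2 => h (eq_of_beq h2).symm), if_neg (fun h2 => h h2.symm)]
    simp only [this, Finset.sum_add_distrib, ih, Finset.sum_ite_eq Finset.univ b,
      Finset.mem_univ, if_true, List.length_cons]

lemma pssub_pnorm_lt {Q P : α → ℕ} (h : PSSub Q P) : pnorm Q < pnorm P := by
  obtain ⟨hle, hne⟩ := h
  have : ∃ a, Q a ≠ P a := Function.ne_iff.mp hne
  obtain ⟨a, ha⟩ := this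
  exact Finset.sum_lt_sum (fun i _ => hle i) ⟨a, Finset.mem_univ a, lt_of_le_of_ne (hle a) ha⟩

lemma pnorm_pos {Q P : α → ℕ} (h : PSSub Q P) : 0 < pnorm P :=
  lt_of_le_of_lt (Nat.zero_le _) (pssub_pnorm_lt h)

lemma pssub_nil {P : α → ℕ} (hp : 0 < pnorm P) : PSSub (parikh ([] : List α)) P := by
  constructor
  · intro a; simp [parikh]
  · intro h
    have := pnorm_parikh ([] : List α)
    rw [h] at this
    simp at this; omega

lemma parikh_reverse (s : List α) : parikh s.reverse = parikh s := by
  funext a; simp [parikh]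

lemma pssub_of_sublist {s t : List α} {P : α → ℕ} (hsub : List.Sublist s t)
    (h : PSSub (parikh t) P) : PSSub (parikh s) P := by
  constructor
  · intro a; exact le_trans (hsub.count_le a) (h.1 a)
  · intro he
    have h1 : pnorm (parikh s) < pnorm P := by
      calc pnorm (parikh s) = s.length := pnorm_parikh s
        _ ≤ t.length := hsub.length_le
        _ = pnorm (parikh t) := (pnorm_parikh t).symm
        _ < pnorm P := pssub_pnorm_lt h
    rw [he] at h1; omega

/-- head ++ cores ++ tail form, with at least n cores -/
def HPC (P : α → ℕ) (x : List α) (n : ℕ) : Prop :=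
  ∃ h cs tl, n ≤ cs.length ∧ x = h ++ List.flatten cs ++ tl ∧
    (∀ c ∈ cs, parikh c = P) ∧ PSSub (parikh h) P ∧ PSSub (parikh tl) P

lemma hpc_mono {P : α → ℕ} {x : List α} {n n' : ℕ} (h : HPC P x n) (hle : n' ≤ n) :
    HPC P x n' := by
  obtain ⟨h, cs, tl, hl, rest⟩ := h
  exact ⟨h, cs, tl, le_trans hle hl, rest⟩

lemma map_getD_range {β : Type*} (l : List (List β)) :
    (List.range l.length).map (fun i => l.getD i []) = l := by
  induction l with
  | nil => simp
  | cons x xs ih =>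
    rw [List.length_cons, List.range_succ_eq_map, List.map_cons, List.map_map]
    refine congrArg₂ List.cons rfl ?_
    have h2 : ((fun i => (x :: xs).getD i []) ∘ Nat.succ) = (fun i => xs.getD i []) := by
      funext i; simp
    rw [h2, ih]

lemma join_decomp (u : ℕ → List α) (k : ℕ) :
    ((List.range (k+2)).map u).flatten
      = u 0 ++ ((List.range k).map (fun i => u (i+1))).flatten ++ u (k+1) := by
  rw [List.range_succ, List.range_succ_eq_map]
  simp only [List.map_append, List.map_cons, List.flatten_append, List.flatten_cons, List.map_map]
  simp [List.append_assoc, Function.comp, List.flatten]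
  rfl

lemma hpc_of_isPF {P : α → ℕ} {x : List α} {m : ℕ} {u : ℕ → List α}
    (h : IsPF P x m u) : HPC P x (m - 1) := by
  obtain ⟨hm, hx, hcore, hh, ht⟩ := h
  obtain ⟨k, rfl⟩ : ∃ k, m = k + 1 := ⟨m - 1, by omega⟩
  refine ⟨u 0, (List.range k).map (fun i => u (i+1)), u (k+1), by simp, ?_, ?_, hh, ht⟩
  · rw [hx]; exact join_decomp u k
  · intro c hc
    obtain ⟨i, hi, rfl⟩ := List.mem_map.mp hc
    exact hcore (i+1) (by omega) (by simpa using List.mem_range.mp hi)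

lemma isPF_of_hpc {P : α → ℕ} {x : List α} {n : ℕ} (h : HPC P x n) :
    ∃ m u, n + 1 ≤ m ∧ IsPF P x m u := by
  obtain ⟨hd, cs, tl, hl, hx, hcs, hh, htl⟩ := h
  set L : List (List α) := hd :: (cs ++ [tl]) with hL
  refine ⟨cs.length + 1, fun i => L.getD i [], by omega, by omega, ?_, ?_, ?_, ?_⟩
  · have hlen : L.length = cs.length + 2 := by simp [hL]
    rw [← hlen, map_getD_range, hL]
    simp [hx, List.flatten_append]
  · intro i hi0 hik
    have h1 : L.getD i [] = cs.getD (i-1) [] := by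
      obtain ⟨i', rfl⟩ : ∃ i', i = i' + 1 := ⟨i - 1, by omega⟩
      rw [hL]
      simp only [List.getD_cons_succ, Nat.add_sub_cancel]
      rw [List.getD_append _ _ _ _ (by omega)]
    show parikh (L.getD i []) = P
    have hlt : i - 1 < cs.length := by omega
    rw [h1, List.getD_eq_getElem _ _ hlt]
    exact hcs _ (List.getElem_mem hlt)
  · simpa [hL] using hh
  · have : L.getD (cs.length + 1) [] = tl := by
      rw [hL]
      simp only [List.getD_cons_succ]
      rw [List.getD_append_right _ _ _ _ (by simp), ]
      simp
    show PSSub (parikh (L.getD (cs.length+1) [])) P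
    rw [this]; exact htl

lemma join_cons' {β : Type*} (c : List β) (cs : List (List β)) :
    List.flatten (c :: cs) = c ++ List.flatten cs := by simp [List.flatten]

lemma pssub_take {P : α → ℕ} {t : List α} (h : PSSub (parikh t) P) (n : ℕ) :
    PSSub (parikh (t.take n)) P := pssub_of_sublist (List.take_sublist n t) h

lemma hpc_take_aux {P : α → ℕ} (hp : 0 < pnorm P) :
    ∀ (cs : List (List α)) (tl : List α) (n : ℕ),
      (∀ c ∈ cs, parikh c = P) → PSSub (parikh tl) P →
      ∃ ds tl', ((List.flatten cs) ++ tl).take n = List.flatten ds ++ tl' ∧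
        (∀ c ∈ ds, parikh c = P) ∧ PSSub (parikh tl') P := by
  intro cs
  induction cs with
  | nil =>
    intro tl n _ htl
    exact ⟨[], tl.take n, by simp, by simp, pssub_take htl n⟩
  | cons c0 cs' ih =>
    intro tl n hcs htl
    by_cases hn : n < c0.length
    · refine ⟨[], (c0.take n), ?_, by simp, ?_⟩
      · rw [join_cons', List.append_assoc, List.take_append_of_le_length (by omega)]
        simp
      · constructor
        · intro a
          have : (c0.take n).count a ≤ c0.count a := (List.take_sublist n c0).count_le a
          have h2 : parikh c0 = P := hcs c0 (by simp)
          calc parikh (c0.take n) a ≤ parikh c0 a := this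
            _ = P a := by rw [h2]
        · intro he
          have h1 : pnorm (parikh (c0.take n)) = n := by
            rw [pnorm_parikh, List.length_take]
            omega
          have h2 : c0.length = pnorm P := by
            rw [← pnorm_parikh, hcs c0 (by simp)]
          rw [he] at h1; omega
    · obtain ⟨ds, tl', heq, hds, htl'⟩ := ih tl (n - c0.length)
        (fun c hc => hcs c (by simp [hc])) htl
      refine ⟨c0 :: ds, tl', ?_, ?_, htl'⟩
      · rw [join_cons', List.append_assoc]
        rw [show n = c0.length + (n - c0.length) by omega, List.take_length_add_append]
        rw [heq, join_cons', List.append_assoc]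
      · intro c hc
        rcases List.mem_cons.mp hc with h | h
        · subst h; exact hcs c (by simp)
        · exact hds c h

lemma hpc_prefix {P : α → ℕ} {x s : List α} (h : HPC P x 0) (hs : s <+: x) :
    HPC P s 0 := by
  obtain ⟨hd, cs, tl, _, hx, hcs, hh, htl⟩ := h
  have hp : 0 < pnorm P := pnorm_pos hh
  have hst : s = x.take s.length := List.prefix_iff_eq_take.mp hs
  by_cases hn : s.length ≤ hd.length
  · refine ⟨hd.take s.length, [], [], by simp, ?_, by simp, pssub_take hh _, pssub_nil hp⟩
    rw [hst, hx, List.append_assoc, List.take_append_of_le_length hn]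
    simp
  · obtain ⟨ds, tl', heq, hds, htl'⟩ :=
      hpc_take_aux hp cs tl (s.length - hd.length) hcs htl
    refine ⟨hd, ds, tl', by simp, ?_, hds, hh, htl'⟩
    rw [hst, hx, List.append_assoc]
    rw [show s.length = hd.length + (s.length - hd.length) by omega, List.take_length_add_append]
    rw [heq, List.append_assoc]

lemma hpc_reverse {P : α → ℕ} {x : List α} {n : ℕ} (h : HPC P x n) :
    HPC P x.reverse n := by
  obtain ⟨hd, cs, tl, hl, hx, hcs, hh, htl⟩ := h
  refine ⟨tl.reverse, (cs.map List.reverse).reverse, hd.reverse, by simpa using hl, ?_, ?_, ?_, ?_⟩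
  · rw [hx]
    simp only [List.reverse_append]
    rw [List.reverse_flatten]
    simp [List.append_assoc]
  · intro c hc
    rw [List.mem_reverse, List.mem_map] at hc
    obtain ⟨c', hc', rfl⟩ := hc
    rw [parikh_reverse]; exact hcs c' hc'
  · rw [parikh_reverse]; exact htl
  · rw [parikh_reverse]; exact hh

lemma hpc_suffix {P : α → ℕ} {x s : List α} (h : HPC P x 0) (hs : s <:+ x) :
    HPC P s 0 := by
  have h1 : HPC P x.reverse 0 := hpc_reverse h
  have h2 : s.reverse <+: x.reverse := List.reverse_prefix.mpr hs
  have h3 : HPC P s.reverse 0 := hpc_prefix h1 h2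
  simpa using hpc_reverse h3

lemma join_length {P : α → ℕ} {cs : List (List α)} (hcs : ∀ c ∈ cs, parikh c = P) :
    (List.flatten cs).length = cs.length * pnorm P := by
  induction cs with
  | nil => simp
  | cons c0 cs' ih =>
    rw [join_cons', List.length_append, ih (fun c hc => hcs c (by simp [hc]))]
    have : c0.length = pnorm P := by rw [← pnorm_parikh, hcs c0 (by simp)]
    rw [this, List.length_cons]
    ring

lemma ext_left {P : α → ℕ} (a : α) (y : List α)
    (h2 : HPC P y 2) (h0 : HPC P (a :: y) 0) : HPC P (a :: y) 2 := by
  obtain ⟨hd, cs, tl, hlen, hy, hcs, hh, htl⟩ := h2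
  have hp : 0 < pnorm P := pnorm_pos hh
  by_cases hle : ∀ b, parikh (a :: hd) b ≤ P b
  · by_cases heq : parikh (a :: hd) = P
    · refine ⟨[], (a :: hd) :: cs, tl, by simp; omega, ?_, ?_, pssub_nil hp, htl⟩
      · rw [join_cons']
        simp [hy]
      · intro c hc
        rcases List.mem_cons.mp hc with h | h
        · subst h; exact heq
        · exact hcs c h
    · exact ⟨a :: hd, cs, tl, hlen, by simp [hy], hcs, ⟨hle, heq⟩, htl⟩
  · -- overflow case
    push_neg at hle
    obtain ⟨b, hb⟩ := hle
    have hba : parikh (a :: hd) a > P a := by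
      by_cases h : b = a
      · subst h; omega
      · exfalso
        have : parikh (a :: hd) b = parikh hd b := by
          simp [parikh, List.count_cons]
          intro h'; exact absurd h'.symm h
        rw [this] at hb
        exact absurd (hh.1 b) (by omega)
    obtain ⟨h', ds, tl', _, hz, hds, hh', htl'⟩ := h0
    have hj : (List.flatten cs).length = cs.length * pnorm P := join_length hcs
    have hcs2 : cs.length * pnorm P ≥ 2 * pnorm P := Nat.mul_le_mul_right _ hlen
    have l4 : y.length ≥ hd.length + 2 * pnorm P := by
      rw [hy]; simp only [List.length_append]; omega
    match ds with
    | [] =>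
      exfalso
      have l1 : (a :: y).length = h'.length + tl'.length := by
        rw [hz]; simp
      have l2 : h'.length < pnorm P := by
        rw [← pnorm_parikh]; exact pssub_pnorm_lt hh'
      have l3 : tl'.length < pnorm P := by
        rw [← pnorm_parikh]; exact pssub_pnorm_lt htl'
      simp only [List.length_cons] at l1
      omega
    | [d] =>
      exfalso
      have l1 : (a :: y).length = h'.length + d.length + tl'.length := by
        rw [hz]; simp [join_cons']; omega
      have l2 : h'.length < pnorm P := by
        rw [← pnorm_parikh]; exact pssub_pnorm_lt hh'
      have l3 : tl'.length < pnorm P := by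
        rw [← pnorm_parikh]; exact pssub_pnorm_lt htl'
      have ld : d.length = pnorm P := by
        rw [← pnorm_parikh, hds d (by simp)]
      have lh' : hd.length + 1 < h'.length := by
        simp only [List.length_cons] at l1
        omega
      have c1 : (a :: y).take (hd.length + 1) = a :: hd := by
        rw [hy, List.take_succ_cons, List.append_assoc, List.take_left]
      have c2 : (a :: y).take h'.length = h' := by
        rw [hz, List.append_assoc, List.take_left]
      have csub : List.Sublist ((a :: y).take (hd.length + 1)) ((a :: y).take h'.length) := by
        rw [show hd.length + 1 = min (hd.length + 1) h'.length by omega,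
          ← List.take_take]
        exact List.take_sublist _ _
      have hcount : parikh (a :: hd) a ≤ parikh h' a := by
        rw [← c1, ← c2]
        exact csub.count_le a
      have : parikh h' a ≤ P a := hh'.1 a
      omega
    | d1 :: d2 :: ds' =>
      exact ⟨h', d1 :: d2 :: ds', tl', by simp, hz, hds, hh', htl'⟩

lemma ext_right {P : α → ℕ} (a : α) (y : List α)
    (h2 : HPC P y 2) (h0 : HPC P (y ++ [a]) 0) : HPC P (y ++ [a]) 2 := by
  have h2' : HPC P y.reverse 2 := hpc_reverse h2
  have h0' : HPC P (a :: y.reverse) 0 := by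
    have := hpc_reverse h0
    simpa using this
  have := hpc_reverse (ext_left a y.reverse h2' h0')
  simpa using this


lemma frag_sub (w : List α) {i' j' ii jj : ℕ} (h1 : i' ≤ ii) (h2 : jj ≤ j')
    (h3 : ii ≤ jj + 1) :
    frag w ii jj = ((frag w i' j').drop (ii - i')).take (jj + 1 - ii) := by
  unfold frag
  rw [List.drop_take, List.drop_drop, List.take_take]
  congr 1
  · rw [Nat.min_def]
    split <;> omega
  · congr 1
    omega

lemma frag_cons (w : List α) {i j : ℕ} (hi : 1 ≤ i) (hij : i ≤ j) (hj : j < w.length) :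
    ∃ a, frag w (i - 1) j = a :: frag w i j := by
  have hlt : i - 1 < w.length := by omega
  refine ⟨w[i-1], ?_⟩
  unfold frag
  rw [List.drop_eq_getElem_cons hlt]
  rw [show j + 1 - (i - 1) = (j + 1 - i) + 1 by omega, List.take_succ_cons]
  congr 2
  congr 1
  omega

lemma frag_snoc (w : List α) {i j : ℕ} (hij : i ≤ j + 1) (hj : j + 1 < w.length) :
    ∃ a, frag w i (j + 1) = frag w i j ++ [a] := by
  have hlt : j + 1 - i < (w.drop i).length := by
    rw [List.length_drop]; omega
  refine ⟨(w.drop i)[j + 1 - i], ?_⟩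
  unfold frag
  rw [show j + 1 + 1 - i = (j + 1 - i) + 1 by omega, List.take_succ,
    List.getElem?_eq_getElem hlt]
  simp

/-- If two fragments have abelian period P and one is properly contained in the
other, the inner one is not an abelian run with period P. -/

theorem not_abelianRun_of_properly_contained (P : α → ℕ) (w : List α)
    (i j i' j' : ℕ) (hij : i ≤ j) (hij' : i' ≤ j') (hj' : j' < w.length)
    (h1 : HasPeriod P w i j) (h2 : HasPeriod P w i' j')
    (hc : (i' < i ∧ j ≤ j') ∨ (i' ≤ i ∧ j < j')) :
    ¬ AbelianRun P w i j := by
  intro hrun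
  obtain ⟨hij2, hjlen, hper, hLmax, hRmax⟩ := hrun
  have hp2 : HPC P (frag w i j) 2 := by
    obtain ⟨m, u, hm3, hpf⟩ := hper
    exact hpc_mono (hpc_of_isPF hpf) (by omega)
  have hx : HPC P (frag w i' j') 0 := by
    obtain ⟨m, u, hpf⟩ := h2
    exact hpc_mono (hpc_of_isPF hpf) (by omega)
  rcases hc with ⟨hii, hjj⟩ | ⟨hii, hjj⟩
  · have hi1 : 1 ≤ i := by omega
    have hL' : ¬ APeriodic P w (i - 1) j := by
      rcases hLmax with h | h
      · omega
      · exact h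
    apply hL'
    obtain ⟨a, ha⟩ := frag_cons w hi1 hij hjlen
    have hinf : HPC P (frag w (i - 1) j) 0 := by
      rw [frag_sub w (show i' ≤ i - 1 by omega) (show j ≤ j' by omega)
        (show i - 1 ≤ j + 1 by omega)]
      exact hpc_prefix (hpc_suffix hx (List.drop_suffix _ _)) (List.take_prefix _ _)
    have h2' : HPC P (frag w (i - 1) j) 2 := by
      rw [ha] at hinf ⊢
      exact ext_left a _ hp2 hinf
    obtain ⟨m, u, hm, hpf⟩ := isPF_of_hpc h2'
    exact ⟨m, u, by omega, hpf⟩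
  · have hj1 : j + 1 < w.length := by omega
    have hR' : ¬ APeriodic P w i (j + 1) := by
      rcases hRmax with h | h
      · omega
      · exact h
    apply hR'
    obtain ⟨a, ha⟩ := frag_snoc w (show i ≤ j + 1 by omega) hj1
    have hinf : HPC P (frag w i (j + 1)) 0 := by
      rw [frag_sub w (show i' ≤ i by omega) (show j + 1 ≤ j' by omega)
        (show i ≤ j + 1 + 1 by omega)]
      exact hpc_prefix (hpc_suffix hx (List.drop_suffix _ _)) (List.take_prefix _ _)
    have h2' : HPC P (frag w i (j + 1)) 2 := by
      rw [ha] at hinf ⊢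
      exact ext_right a _ hp2 hinf
    obtain ⟨m, u, hm, hpf⟩ := isPF_of_hpc h2'
    exact ⟨m, u, by omega, hpf⟩
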